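/- Let 𝒞 ⊆ ℝ^d be a closed, bounded, convex set and A > 0 with the closed ball B̄(0,A) ⊆ 𝒞. If v ∈ 𝒞, w ∈ ℝ^d with |w − v| ≤ A/2, 0 < η ≤ 1, and t > 0 with |1 − t| ≤ η/2, then (v − ηw)/t ∈ 𝒞. -/

import Mathlib

open MeasureTheory Set Filter Topology
open scoped ENNReal Pointwise

/-- Geometric lemma: if `C` is a closed, bounded, convex set containing the closed ball
of radius `A` around the origin, `v ∈ C`, `|w - v| ≤ A/2`, `0 < η ≤ 1`, `t > 0` and
`|1 - t| ≤ η/2`, then `(v - ηw)/t ∈ C`. -/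
theorem smul_sub_mem_of_convex {d : ℕ} (C : Set (EuclideanSpace ℝ (Fin d))) (A : ℝ)
    (hA : 0 < A) (hclosed : IsClosed C) (hbounded : Bornology.IsBounded C)
    (hconv : Convex ℝ C) (hball : Metric.closedBall (0 : EuclideanSpace ℝ (Fin d)) A ⊆ C)
    (v w : EuclideanSpace ℝ (Fin d)) (hv : v ∈ C) (hw : ‖w - v‖ ≤ A / 2)
    (η t : ℝ) (hη : 0 < η) (hη1 : η ≤ 1) (ht : 0 < t) (htη : |1 - t| ≤ η / 2) :
    t⁻¹ • (v - η • w) ∈ C := by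
  have h1 : 1 - t ≤ η / 2 := (abs_le.mp htη).2
  set a : ℝ := (1 - η) / t with ha_def
  set b : ℝ := (t - 1 + η) / t with hb_def
  have hb_pos : 0 < b := div_pos (by linarith) ht
  have ha_nonneg : 0 ≤ a := div_nonneg (by linarith) ht.le
  have hab : a + b = 1 := by
    rw [ha_def, hb_def, ← add_div, div_eq_one_iff_eq ht.ne']; ring
  set z : EuclideanSpace ℝ (Fin d) := b⁻¹ • ((η / t) • (v - w)) with hz_def
  have hzA : z ∈ Metric.closedBall (0 : EuclideanSpace ℝ (Fin d)) A := by
    rw [Metric.mem_closedBall, dist_zero_right, hz_def, norm_smul, norm_smul,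
      Real.norm_eq_abs, Real.norm_eq_abs, abs_of_pos (inv_pos.mpr hb_pos),
      abs_of_pos (div_pos hη ht), ← norm_neg (v - w), neg_sub]
    rw [inv_mul_le_iff₀ hb_pos]
    have : η / t * ‖w - v‖ ≤ η / t * (A / 2) := by
      exact mul_le_mul_of_nonneg_left hw (div_pos hη ht).le
    refine this.trans ?_
    rw [hb_def, div_mul_eq_mul_div, div_mul_eq_mul_div, div_le_div_iff₀ ht (by positivity)]
    nlinarith [mul_nonneg (mul_nonneg hA.le ht.le) (show (0:ℝ) ≤ t - 1 + η / 2 by linarith)]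
  have hz : z ∈ C := hball hzA
  have key : t⁻¹ • (v - η • w) = a • v + b • z := by
    rw [hz_def, smul_smul, mul_inv_cancel₀ hb_pos.ne', one_smul]
    have : (η / t) • (v - w) = (η / t) • v - (η / t) • w := smul_sub _ _ _
    rw [this, ha_def, smul_sub]
    have h2 : ((1 - η) / t) • v + ((η / t) • v - (η / t) • w)
        = ((1 - η) / t + η / t) • v - (η / t) • w := by
      rw [add_smul]; abel
    rw [h2]
    have h3 : (1 - η) / t + η / t = t⁻¹ := by field_simp; ring
    have h4 : η / t = t⁻¹ * η := by field_simp
    rw [h3, h4, ← smul_smul]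
  rw [key]
  exact hconv hv hz ha_nonneg hb_pos.le hab
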